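/- arXiv:2412.04926 — 2 statements merged into one kernel-verified Lean document; each statement's English description precedes it below -/
import Mathlib

section
/- For every α > 1/2, the Weierstrass function W(t) = ∑_{n=1}^∞ cos(4ⁿ t)/2ⁿ is not in C^α(t₀) for any t₀ ∈ ℝ; i.e., for every t₀ and every constant C there exists arbitrarily small h > 0 with |W(t₀+h) − W(t₀)| > C h^α. -/
open Real

noncomputable def W (t : ℝ) : ℝ :=
  ∑' n : ℕ, Real.cos ((4 : ℝ) ^ (n + 1) * t) / 2 ^ (n + 1)

lemma W_summable (t : ℝ) :
    Summable (fun n : ℕ => Real.cos ((4 : ℝ) ^ (n + 1) * t) / 2 ^ (n + 1)) := by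
  have hg : Summable (fun n : ℕ => (1 / 2 : ℝ) * (1 / 2) ^ n) :=
    (summable_geometric_of_lt_one (by norm_num) (by norm_num)).mul_left _
  apply Summable.of_abs
  refine hg.of_nonneg_of_le (fun n => abs_nonneg _) (fun n => ?_)
  have hrw : (1 / 2 : ℝ) * (1 / 2) ^ n = 1 / 2 ^ (n + 1) := by
    rw [div_pow, one_pow, pow_succ]; ring
  rw [hrw, abs_div, abs_of_pos (show (0:ℝ) < 2 ^ (n+1) by positivity)]
  exact div_le_div₀ zero_le_one (Real.abs_cos_le_one _) (by positivity) le_rfl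

lemma weier_sd (A φ : ℝ) :
    Real.cos A - 2 * Real.cos (A + φ) + Real.cos (A + 2 * φ) =
      2 * Real.cos (A + φ) * (Real.cos φ - 1) := by
  simp only [Real.cos_add, Real.cos_two_mul, Real.sin_two_mul]
  ring

lemma weier_abs_cos (k : ℤ) : |Real.cos ((k : ℝ) * π)| = 1 := by
  rcases Int.even_or_odd k with ⟨q, hq⟩ | ⟨q, hq⟩
  · subst hq
    have : ((q + q : ℤ) : ℝ) * π = (q : ℝ) * (2 * π) := by push_cast; ring
    rw [this, Real.cos_int_mul_two_pi, abs_one]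
  · subst hq
    have : ((2 * q + 1 : ℤ) : ℝ) * π = (q : ℝ) * (2 * π) + π := by push_cast; ring
    rw [this, Real.cos_int_mul_two_pi_add_pi, abs_neg, abs_one]

lemma weier_cp (j : ℕ) (k : ℤ) : Real.cos ((4:ℝ) ^ (j + 1) * ((k : ℝ) * π)) = 1 := by
  have : (4:ℝ) ^ (j + 1) * ((k : ℝ) * π) = ((k * (2 * 4 ^ j) : ℤ) : ℝ) * (2 * π) := by
    push_cast; ring
  rw [this, Real.cos_int_mul_two_pi]

set_option maxHeartbeats 1000000 in
/-- For every `α > 1/2`, the Weierstrass function `W` is not in `C^α(t₀)` for any `t₀`: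
for every `t₀`, every constant `C` and every `δ > 0` there is `0 < h < δ` with
`|W(t₀+h) − W(t₀)| > C h^α`. -/
theorem weierstrass_not_Calpha (α : ℝ) (hα : 1 / 2 < α) (t₀ : ℝ) (C : ℝ) (δ : ℝ) (hδ : 0 < δ) :
    ∃ h : ℝ, 0 < h ∧ h < δ ∧ C * h ^ α < |W (t₀ + h) - W t₀| := by
  by_contra hcon
  push_neg at hcon
  have hπ := Real.pi_pos
  set M : ℝ := max C 0 with hMdef
  have hM0 : 0 ≤ M := le_max_right _ _
  have hCM : C ≤ M := le_max_left _ _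
  have hβ : (0:ℝ) < 2 * α - 1 := by linarith
  have hα0 : 0 ≤ α := by linarith
  have hr1 : (1:ℝ) < (2:ℝ) ^ (2 * α - 1) := by
    rw [Real.one_lt_rpow_iff_of_pos (by norm_num)]
    exact Or.inl ⟨one_lt_two, hβ⟩
  obtain ⟨N₁, hN₁⟩ := pow_unbounded_of_one_lt (3 * π / δ) (show (1:ℝ) < 4 by norm_num)
  obtain ⟨N₂, hN₂⟩ := pow_unbounded_of_one_lt (4 * M * (3 * π) ^ α / (5 / 2)) hr1
  set N₀ : ℕ := max N₁ N₂ with hN₀def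
  set N : ℕ := N₀ + 1 with hNdef
  have h4N : (0:ℝ) < 4 ^ N := by positivity
  have h2N : (0:ℝ) < 2 ^ N := by positivity
  -- δ condition
  have hδN : 3 * π / 4 ^ N < δ := by
    have h2 : (4:ℝ) ^ N₁ ≤ 4 ^ N := by
      apply pow_le_pow_right₀ (by norm_num)
      omega
    rw [div_lt_iff₀ hδ] at hN₁
    rw [div_lt_iff₀ h4N]
    nlinarith [hδ, h2]
  -- Hölder smallness condition
  have hkey : 4 * M * (3 * π) ^ α / ((4:ℝ) ^ N) ^ α < (5 / 2) / 2 ^ N := by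
    have hpowle : ((2:ℝ) ^ (2*α-1)) ^ N₂ ≤ ((2:ℝ) ^ (2*α-1)) ^ N := by
      apply pow_le_pow_right₀ hr1.le
      omega
    have h1 : 4 * M * (3 * π) ^ α < (5/2) * ((2:ℝ) ^ (2*α-1)) ^ N := by
      rw [div_lt_iff₀ (by norm_num : (0:ℝ) < 5/2)] at hN₂
      calc 4 * M * (3 * π) ^ α < ((2:ℝ) ^ (2*α-1)) ^ N₂ * (5/2) := hN₂
        _ ≤ ((2:ℝ) ^ (2*α-1)) ^ N * (5/2) := by nlinarith
        _ = (5/2) * ((2:ℝ) ^ (2*α-1)) ^ N := by ring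
    have hid : ((2:ℝ) ^ (2*α-1)) ^ N * 2 ^ N = ((4:ℝ) ^ N) ^ α := by
      have e1 : ((2:ℝ) ^ (2*α-1)) ^ N = (2:ℝ) ^ ((2*α-1) * N) := by
        rw [← Real.rpow_natCast ((2:ℝ) ^ (2*α-1)) N, ← Real.rpow_mul (by norm_num)]
      have e2 : ((2:ℝ)) ^ N = (2:ℝ) ^ (N:ℝ) := (Real.rpow_natCast 2 N).symm
      have e4 : ((4:ℝ) ^ N) = (2:ℝ) ^ (2*N) := by rw [pow_mul]; norm_num
      rw [e1, e4, ← Real.rpow_natCast 2 (2*N), ← Real.rpow_mul (by norm_num), e2,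
        ← Real.rpow_add (by norm_num)]
      congr 1
      push_cast
      ring
    have hrpos : (0:ℝ) < ((4:ℝ) ^ N) ^ α := Real.rpow_pos_of_pos h4N α
    rw [div_lt_div_iff₀ hrpos h2N, ← hid]
    calc 4 * M * (3 * π) ^ α * 2 ^ N < (5/2) * ((2:ℝ) ^ (2*α-1)) ^ N * 2 ^ N := by nlinarith
      _ = 5 / 2 * (((2:ℝ) ^ (2*α-1)) ^ N * 2 ^ N) := by ring
  -- the three points
  set m : ℤ := ⌊4 ^ N * t₀ / π⌋ + 1 with hmdef
  have hm_lt : 4 ^ N * t₀ < (m:ℝ) * π := by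
    have h := Int.lt_floor_add_one ((4:ℝ) ^ N * t₀ / π)
    have : (4:ℝ) ^ N * t₀ / π * π < ((m:ℝ)) * π := by
      apply mul_lt_mul_of_pos_right _ hπ
      rw [hmdef]; push_cast; linarith
    rwa [div_mul_cancel₀ _ (ne_of_gt hπ)] at this
  have hm_le : (m:ℝ) * π ≤ 4 ^ N * t₀ + π := by
    have h := Int.floor_le ((4:ℝ) ^ N * t₀ / π)
    have h' : ((⌊(4:ℝ) ^ N * t₀ / π⌋ : ℝ)) * π ≤ (4:ℝ) ^ N * t₀ / π * π :=
      mul_le_mul_of_nonneg_right h hπ.le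
    rw [div_mul_cancel₀ _ (ne_of_gt hπ)] at h'
    rw [hmdef]; push_cast; linarith
  set s : ℝ := π / 4 ^ N with hsdef
  have hs : 0 < s := by positivity
  set x0 : ℝ := (m:ℝ) * π / 4 ^ N with hx0def
  have hx0N : x0 * 4 ^ N = (m:ℝ) * π := by rw [hx0def]; field_simp
  have hsN : s * 4 ^ N = π := by rw [hsdef]; field_simp
  have ht0x0 : t₀ < x0 := by
    have : t₀ * 4 ^ N < x0 * 4 ^ N := by rw [hx0N]; linarith [hm_lt]
    exact lt_of_mul_lt_mul_right this h4N.le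
  have hx0s : x0 - t₀ ≤ s := by
    have : (x0 - t₀) * 4 ^ N ≤ s * 4 ^ N := by
      rw [sub_mul, hx0N, hsN]; linarith [hm_le]
    exact le_of_mul_le_mul_right this h4N
  -- the combination
  set E : ℝ := W x0 - 2 * W (x0 + s) + W (x0 + 2 * s) with hEdef
  set f : ℕ → ℝ := fun n =>
    Real.cos ((4:ℝ) ^ (n+1) * x0) / 2 ^ (n+1)
    - 2 * (Real.cos ((4:ℝ) ^ (n+1) * (x0 + s)) / 2 ^ (n+1))
    + Real.cos ((4:ℝ) ^ (n+1) * (x0 + 2 * s)) / 2 ^ (n+1) with hfdef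
  have hsum0 := W_summable x0
  have hsum1 := W_summable (x0 + s)
  have hsum2 := W_summable (x0 + 2 * s)
  have hE : E = ∑' n, f n := by
    rw [hEdef, W, W, W, ← tsum_mul_left, ← Summable.tsum_sub hsum0 ((hsum1).mul_left 2),
      ← Summable.tsum_add ((hsum0).sub ((hsum1).mul_left 2)) hsum2]
  -- high frequencies vanish
  have hf_high : ∀ n, N ≤ n → f n = 0 := by
    intro n hn
    obtain ⟨j, rfl⟩ := Nat.exists_eq_add_of_le hn
    have harg : ∀ c : ℝ, (4:ℝ) ^ (N + j + 1) * (c * π / 4 ^ N) = 4 ^ (j + 1) * (c * π) := by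
      intro c
      field_simp
      ring
    have e0 : (4:ℝ) ^ (N + j + 1) * x0 = 4 ^ (j+1) * ((m:ℝ) * π) := by
      rw [hx0def]; exact harg _
    have e1 : (4:ℝ) ^ (N + j + 1) * (x0 + s) = 4 ^ (j+1) * (((m+1 : ℤ):ℝ) * π) := by
      have hx : x0 + s = ((m:ℝ) + 1) * π / 4 ^ N := by rw [hx0def, hsdef]; ring
      rw [hx, harg]; push_cast; ring
    have e2 : (4:ℝ) ^ (N + j + 1) * (x0 + 2 * s) = 4 ^ (j+1) * (((m+2 : ℤ):ℝ) * π) := by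
      have hx : x0 + 2 * s = ((m:ℝ) + 2) * π / 4 ^ N := by rw [hx0def, hsdef]; ring
      rw [hx, harg]; push_cast; ring
    rw [hfdef]
    simp only [e0, e1, e2]
    rw [weier_cp j m, weier_cp j (m+1), weier_cp j (m+2)]
    ring
  -- the key term
  have hf_key : |f N₀| = 4 / 2 ^ N := by
    have e0 : (4:ℝ) ^ (N₀ + 1) * x0 = (m:ℝ) * π := by
      rw [hx0def, ← hNdef]; field_simp
    have e1 : (4:ℝ) ^ (N₀ + 1) * (x0 + s) = (m:ℝ) * π + π := by
      rw [hx0def, hsdef, ← hNdef]; field_simp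
    have e2 : (4:ℝ) ^ (N₀ + 1) * (x0 + 2 * s) = (m:ℝ) * π + 2 * π := by
      rw [hx0def, hsdef, ← hNdef]; field_simp
    have hval : f N₀ = (2 * Real.cos ((m:ℝ) * π + π) * (Real.cos π - 1)) / 2 ^ N := by
      calc f N₀ = (Real.cos ((m:ℝ) * π) - 2 * Real.cos ((m:ℝ) * π + π)
            + Real.cos ((m:ℝ) * π + 2 * π)) / 2 ^ N := by
            rw [hfdef]; simp only [e0, e1, e2]; rw [← hNdef]; ring
        _ = _ := by rw [weier_sd]
    have hmm : (m:ℝ) * π + π = ((m + 1 : ℤ) : ℝ) * π := by push_cast; ring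
    have habs : |2 * Real.cos (((m + 1 : ℤ) : ℝ) * π) * (Real.cos π - 1)| = 4 := by
      rw [Real.cos_pi, abs_mul, abs_mul, weier_abs_cos]
      norm_num
    rw [hval, hmm, abs_div, habs, abs_of_pos h2N]
  -- low-frequency bound
  have hf_low : ∀ n ∈ Finset.range N₀, |f n| ≤ π ^ 2 * 8 ^ (n+1) / 16 ^ N := by
    intro n _
    set θ : ℝ := (4:ℝ) ^ (n+1) * x0 with hθdef
    set φ : ℝ := (4:ℝ) ^ (n+1) * s with hφdef
    have hval : f n = (2 * Real.cos (θ + φ) * (Real.cos φ - 1)) / 2 ^ (n+1) := by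
      calc f n = (Real.cos θ - 2 * Real.cos (θ + φ) + Real.cos (θ + 2 * φ)) / 2 ^ (n+1) := by
            have a1 : (4:ℝ) ^ (n+1) * (x0 + s) = θ + φ := by rw [hθdef, hφdef]; ring
            have a2 : (4:ℝ) ^ (n+1) * (x0 + 2 * s) = θ + 2 * φ := by rw [hθdef, hφdef]; ring
            simp only [hfdef, a1, a2, hθdef]
            ring
        _ = _ := by rw [weier_sd]
    have hcosb : |2 * Real.cos (θ + φ) * (Real.cos φ - 1)| ≤ φ ^ 2 := by
      have h1 : 1 - φ ^ 2 / 2 ≤ Real.cos φ := Real.one_sub_sq_div_two_le_cos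
      have h2 : |Real.cos φ - 1| ≤ φ ^ 2 / 2 := by
        rw [abs_sub_comm, abs_of_nonneg (by linarith [Real.cos_le_one φ])]
        linarith
      calc |2 * Real.cos (θ + φ) * (Real.cos φ - 1)|
          = 2 * |Real.cos (θ + φ)| * |Real.cos φ - 1| := by
            rw [abs_mul, abs_mul]; norm_num
        _ ≤ 2 * 1 * (φ ^ 2 / 2) := by
            apply mul_le_mul _ h2 (abs_nonneg _) (by norm_num)
            nlinarith [Real.abs_cos_le_one (θ + φ)]
        _ = φ ^ 2 := by ring
    have hφval : φ ^ 2 / 2 ^ (n+1) = π ^ 2 * 8 ^ (n+1) / 16 ^ N := by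
      have p1 : ((4:ℝ) ^ (n+1)) ^ 2 = 16 ^ (n+1) := by
        rw [← pow_mul, mul_comm, pow_mul]; norm_num
      have p2 : (16:ℝ) ^ (n+1) = 8 ^ (n+1) * 2 ^ (n+1) := by
        rw [← mul_pow]; norm_num
      have p3 : ((4:ℝ) ^ N) ^ 2 = 16 ^ N := by
        rw [← pow_mul, mul_comm, pow_mul]; norm_num
      have hφ2 : φ ^ 2 = 16 ^ (n+1) * π ^ 2 / 16 ^ N := by
        rw [hφdef, hsdef, mul_pow, div_pow, p1, p3]
        ring
      rw [hφ2, p2]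
      have h2n1 : (0:ℝ) < 2 ^ (n+1) := by positivity
      have h16N : (0:ℝ) < 16 ^ N := by positivity
      field_simp
    rw [hval, abs_div, abs_of_pos (show (0:ℝ) < 2 ^ (n+1) by positivity), ← hφval]
    exact div_le_div_of_nonneg_right hcosb (by positivity)
  -- sum of low-frequency errors
  have hserr : ∑ n ∈ Finset.range N₀, |f n| ≤ (3/2) / 2 ^ N := by
    have h8 : ∑ n ∈ Finset.range N₀, (π ^ 2 * 8 ^ (n+1) / 16 ^ N : ℝ)
        = π ^ 2 / 16 ^ N * ∑ n ∈ Finset.range N₀, (8:ℝ) ^ (n+1) := by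
      rw [Finset.mul_sum]
      apply Finset.sum_congr rfl
      intro n _
      ring
    have hgeom : ∑ n ∈ Finset.range N₀, (8:ℝ) ^ (n+1) ≤ 8 ^ N / 7 := by
      have hg : ∑ n ∈ Finset.range N₀, (8:ℝ) ^ n = ((8:ℝ) ^ N₀ - 1) / (8 - 1) :=
        geom_sum_eq (by norm_num) N₀
      have : ∑ n ∈ Finset.range N₀, (8:ℝ) ^ (n+1)
          = 8 * ∑ n ∈ Finset.range N₀, (8:ℝ) ^ n := by
        rw [Finset.mul_sum]
        apply Finset.sum_congr rfl
        intro n _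
        ring
      rw [this, hg, hNdef, pow_succ]
      nlinarith [pow_pos (show (0:ℝ) < 8 by norm_num) N₀]
    calc ∑ n ∈ Finset.range N₀, |f n|
        ≤ ∑ n ∈ Finset.range N₀, (π ^ 2 * 8 ^ (n+1) / 16 ^ N : ℝ) :=
          Finset.sum_le_sum hf_low
      _ = π ^ 2 / 16 ^ N * ∑ n ∈ Finset.range N₀, (8:ℝ) ^ (n+1) := h8
      _ ≤ π ^ 2 / 16 ^ N * (8 ^ N / 7) := by
          apply mul_le_mul_of_nonneg_left hgeom (by positivity)
      _ = π ^ 2 / (7 * 2 ^ N) := by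
          have h16 : (16:ℝ) ^ N = 2 ^ N * 8 ^ N := by
            rw [← mul_pow]; norm_num
          rw [h16]
          have h8N : (0:ℝ) < 8 ^ N := by positivity
          field_simp
      _ ≤ (3/2) / 2 ^ N := by
          have hπ2 : π ^ 2 ≤ 10.5 := by nlinarith [Real.pi_lt_d2, Real.pi_pos]
          rw [div_le_div_iff₀ (by positivity) h2N]
          nlinarith [h2N]
  -- lower bound for |E|
  have hEsum : E = (∑ n ∈ Finset.range N₀, f n) + f N₀ := by
    rw [hE, tsum_eq_sum (s := Finset.range N) (fun n hn => hf_high n (by simpa using hn)),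
      hNdef, Finset.sum_range_succ]
  have hElow : (5/2) / 2 ^ N ≤ |E| := by
    have h1 : |∑ n ∈ Finset.range N₀, f n| ≤ (3/2) / 2 ^ N :=
      le_trans (Finset.abs_sum_le_sum_abs _ _) hserr
    have h2 : |f N₀| ≤ |E| + |∑ n ∈ Finset.range N₀, f n| := by
      have : f N₀ = E - ∑ n ∈ Finset.range N₀, f n := by rw [hEsum]; ring
      rw [this]
      exact abs_sub _ _
    rw [hf_key] at h2
    have h4 : (4:ℝ) / 2 ^ N - (3/2) / 2 ^ N = (5/2) / 2 ^ N := by ring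
    linarith
  -- upper bound for |E| from the Hölder hypothesis
  set B : ℝ := M * (3 * s) ^ α with hBdef
  have hbound : ∀ y : ℝ, t₀ < y → y - t₀ ≤ 3 * s → |W y - W t₀| ≤ B := by
    intro y hy1 hy2
    have h3sδ : 3 * s < δ := by
      rw [hsdef]
      calc 3 * (π / 4 ^ N) = 3 * π / 4 ^ N := by ring
        _ < δ := hδN
    have h2 := hcon (y - t₀) (by linarith) (by linarith)
    rw [show t₀ + (y - t₀) = y by ring] at h2
    calc |W y - W t₀| ≤ C * (y - t₀) ^ α := h2
      _ ≤ M * (y - t₀) ^ α :=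
          mul_le_mul_of_nonneg_right hCM (Real.rpow_nonneg (by linarith) _)
      _ ≤ M * (3 * s) ^ α :=
          mul_le_mul_of_nonneg_left (Real.rpow_le_rpow (by linarith) hy2 hα0) hM0
  have hb0 : |W x0 - W t₀| ≤ B := hbound x0 ht0x0 (by linarith)
  have hb1 : |W (x0 + s) - W t₀| ≤ B := hbound _ (by linarith) (by linarith)
  have hb2 : |W (x0 + 2 * s) - W t₀| ≤ B := hbound _ (by linarith) (by linarith)
  have hEup : |E| ≤ 4 * B := by
    have e : E = (W x0 - W t₀) - 2 * (W (x0 + s) - W t₀) + (W (x0 + 2 * s) - W t₀) := by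
      rw [hEdef]; ring
    have a0 := abs_le.mp hb0
    have a1 := abs_le.mp hb1
    have a2 := abs_le.mp hb2
    rw [e, abs_le]
    constructor <;> linarith [a0.1, a0.2, a1.1, a1.2, a2.1, a2.2]
  have hBlt : 4 * B < (5/2) / 2 ^ N := by
    rw [hBdef, hsdef]
    have h3s : (3:ℝ) * (π / 4 ^ N) = 3 * π / 4 ^ N := by ring
    rw [h3s, Real.div_rpow (by positivity) (le_of_lt h4N)]
    calc 4 * (M * ((3 * π) ^ α / ((4:ℝ) ^ N) ^ α)) = 4 * M * (3 * π) ^ α / ((4:ℝ) ^ N) ^ α := by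
          ring
      _ < (5/2) / 2 ^ N := hkey
  linarith
end

section
/- For ν > 2, the set A_ν = {t ∈ [0,1] : |t − p/q| ≤ q^{−ν} for infinitely many coprime pairs (p,q)} satisfies H^{2/μ}(A_ν) = 0 whenever μ < ν, where H^s denotes s-Hausdorff measure. -/
open MeasureTheory Filter ENNReal
open scoped ENNReal Topology

/-- `A_ν`: the set of `t ∈ [0,1]` admitting infinitely many coprime approximations
within `q^{−ν}`. -/
def Aset (ν : ℝ) : Set ℝ :=
  {t : ℝ | t ∈ Set.Icc (0 : ℝ) 1 ∧
    {pq : ℤ × ℕ | 0 < pq.2 ∧ IsCoprime pq.1 (pq.2 : ℤ) ∧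
      |t - (pq.1 : ℝ) / (pq.2 : ℝ)| ≤ (pq.2 : ℝ) ^ (-ν)}.Infinite}

/-- bounds on the numerator of a good approximation of `t ∈ [0,1]`. -/
lemma JB_pbounds {ν t : ℝ} (hν0 : 0 < ν) (ht0 : 0 ≤ t) (ht1 : t ≤ 1) {p : ℤ} {q : ℕ}
    (hq : 1 ≤ q) (h : |t - (p : ℝ) / (q : ℝ)| ≤ (q : ℝ) ^ (-ν)) :
    -(q : ℤ) ≤ p ∧ p ≤ 2 * q := by
  have hq0 : (0 : ℝ) < q := by exact_mod_cast hq
  have h1 : (q : ℝ) ^ (-ν) ≤ 1 :=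
    Real.rpow_le_one_of_one_le_of_nonpos (by exact_mod_cast hq) (by linarith)
  have h2 := abs_le.1 (h.trans h1)
  constructor
  · have h3 : (-1 : ℝ) ≤ (p : ℝ) / q := by linarith [h2.2]
    rw [le_div_iff₀ hq0] at h3
    have : -(q : ℝ) ≤ (p : ℝ) := by linarith
    exact_mod_cast this
  · have h3 : (p : ℝ) / q ≤ 2 := by linarith [h2.1]
    rw [div_le_iff₀ hq0] at h3
    have : (p : ℝ) ≤ 2 * (q : ℝ) := by linarith
    exact_mod_cast this

noncomputable def JBc (ν d : ℝ) (q : ℕ) : ℝ≥0∞ :=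
  ENNReal.ofReal ((2 * (q : ℝ) ^ (-ν)) ^ d)

noncomputable def JBg (ν d : ℝ) (q : ℕ) : ℝ≥0∞ :=
  (3 * q + 1 : ℕ) * JBc ν d q

lemma JBg_sum_ne_top {ν d : ℝ} (hν0 : 0 < ν) (hd0 : 0 < d) (hνd : 2 < ν * d) :
    (∑' q, JBg ν d q) ≠ ⊤ := by
  have hsummable : Summable (fun q : ℕ => 4 * 2 ^ d * (q : ℝ) ^ (1 - ν * d)) :=
    (Real.summable_nat_rpow.2 (by linarith)).mul_left _
  have hnonneg : ∀ q : ℕ, (0 : ℝ) ≤ 4 * 2 ^ d * (q : ℝ) ^ (1 - ν * d) := by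
    intro q
    have := Real.rpow_nonneg (Nat.cast_nonneg q) (1 - ν * d)
    positivity
  have hle : ∀ q : ℕ, JBg ν d q ≤ ENNReal.ofReal (4 * 2 ^ d * (q : ℝ) ^ (1 - ν * d)) := by
    intro q
    rcases Nat.eq_zero_or_pos q with rfl | hq
    · have : JBc ν d 0 = 0 := by
        simp [JBc, Real.zero_rpow (by linarith : -ν ≠ 0), Real.zero_rpow hd0.ne']
      simp [JBg, this]
    · have hq0 : (0 : ℝ) < q := by exact_mod_cast hq
      have hq1 : (1 : ℝ) ≤ q := by exact_mod_cast hq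
      have e1 : (2 * (q : ℝ) ^ (-ν)) ^ d = 2 ^ d * (q : ℝ) ^ (-(ν * d)) := by
        rw [Real.mul_rpow (by norm_num) (Real.rpow_nonneg hq0.le _),
          ← Real.rpow_mul hq0.le, neg_mul]
      have e2 : (q : ℝ) * (q : ℝ) ^ (-(ν * d)) = (q : ℝ) ^ (1 - ν * d) := by
        rw [show (1 : ℝ) - ν * d = 1 + -(ν * d) by ring, Real.rpow_add hq0, Real.rpow_one]
      have hrnn : (0 : ℝ) ≤ 2 ^ d * (q : ℝ) ^ (-(ν * d)) := by positivity
      calc JBg ν d q = ENNReal.ofReal ((3 * q + 1 : ℕ) : ℝ) *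
            ENNReal.ofReal (2 ^ d * (q : ℝ) ^ (-(ν * d))) := by
            rw [JBg, JBc, e1, ENNReal.ofReal_natCast]
        _ = ENNReal.ofReal (((3 * q + 1 : ℕ) : ℝ) * (2 ^ d * (q : ℝ) ^ (-(ν * d)))) :=
            (ENNReal.ofReal_mul (by positivity)).symm
        _ ≤ ENNReal.ofReal (4 * 2 ^ d * (q : ℝ) ^ (1 - ν * d)) := by
            apply ENNReal.ofReal_le_ofReal
            have hcard : ((3 * q + 1 : ℕ) : ℝ) ≤ 4 * q := by
              push_cast
              linarith
            calc ((3 * q + 1 : ℕ) : ℝ) * (2 ^ d * (q : ℝ) ^ (-(ν * d)))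
                ≤ (4 * q) * (2 ^ d * (q : ℝ) ^ (-(ν * d))) :=
                  mul_le_mul_of_nonneg_right hcard hrnn
              _ = 4 * 2 ^ d * ((q : ℝ) * (q : ℝ) ^ (-(ν * d))) := by ring
              _ = 4 * 2 ^ d * (q : ℝ) ^ (1 - ν * d) := by rw [e2]
  apply LT.lt.ne
  calc (∑' q, JBg ν d q)
      ≤ ∑' q : ℕ, ENNReal.ofReal (4 * 2 ^ d * (q : ℝ) ^ (1 - ν * d)) := ENNReal.tsum_le_tsum hle
    _ = ENNReal.ofReal (∑' q : ℕ, 4 * 2 ^ d * (q : ℝ) ^ (1 - ν * d)) :=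
        (ENNReal.ofReal_tsum_of_nonneg hnonneg hsummable).symm
    _ < ⊤ := ENNReal.ofReal_lt_top

/-- Covering half of the Jarník–Besicovitch theorem: for `ν > 2` and `0 < μ < ν`,
`H^{2/μ}(A_ν) = 0`. -/
theorem hausdorff_measure_Aset_eq_zero (ν μ : ℝ) (hν : 2 < ν) (hμ : 0 < μ) (hμν : μ < ν) :
    μH[(2 / μ : ℝ)] (Aset ν) = 0 := by
  have hν0 : (0 : ℝ) < ν := by linarith
  set d : ℝ := 2 / μ with hd
  have hd0 : 0 < d := by positivity
  have hνd : 2 < ν * d := by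
    rw [hd, mul_div_assoc']
    rw [lt_div_iff₀ hμ]
    nlinarith
  -- the covering sets
  set T : ℕ → ℕ × ℤ → Set ℝ := fun Q qp =>
    if max 1 Q ≤ qp.1 ∧ -(qp.1 : ℤ) ≤ qp.2 ∧ qp.2 ≤ 2 * qp.1 then
      Metric.closedBall ((qp.2 : ℝ) / (qp.1 : ℝ)) ((qp.1 : ℝ) ^ (-ν))
    else ∅ with hT
  set r : ℕ → ℝ≥0∞ := fun Q => ENNReal.ofReal (2 * ((max 1 Q : ℕ) : ℝ) ^ (-ν)) with hr
  have hmaxpos : ∀ Q : ℕ, (0 : ℝ) < ((max 1 Q : ℕ) : ℝ) := by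
    intro Q
    exact_mod_cast lt_of_lt_of_le one_pos (le_max_left 1 Q)
  have hrt : Tendsto r atTop (𝓝 0) := by
    have h1 : Tendsto (fun Q : ℕ => ((max 1 Q : ℕ) : ℝ)) atTop atTop :=
      tendsto_natCast_atTop_atTop.comp
        (tendsto_atTop_mono (fun Q => le_max_right 1 Q) tendsto_id)
    have h2 : Tendsto (fun Q : ℕ => 2 * ((max 1 Q : ℕ) : ℝ) ^ (-ν)) atTop (𝓝 0) := by
      have := ((tendsto_rpow_neg_atTop hν0).comp h1).const_mul (2 : ℝ)
      simpa using this
    have := ENNReal.tendsto_ofReal h2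
    simpa [hr] using this
  have hdiam : ∀ Q i, Metric.ediam (T Q i) ≤ r Q := by
    rintro Q ⟨q, p⟩
    rw [hT]
    dsimp only
    split_ifs with h
    · rw [Real.closedBall_eq_Icc, Real.ediam_Icc, hr]
      apply ENNReal.ofReal_le_ofReal
      have hle : ((max 1 Q : ℕ) : ℝ) ≤ q := by exact_mod_cast h.1
      have hrle : (q : ℝ) ^ (-ν) ≤ ((max 1 Q : ℕ) : ℝ) ^ (-ν) :=
        Real.rpow_le_rpow_of_nonpos (hmaxpos Q) hle (by linarith)
      linarith
    · simp
  have hcov : ∀ Q, Aset ν ⊆ ⋃ i, T Q i := by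
    intro Q t ht
    obtain ⟨⟨ht0, ht1⟩, hS⟩ := ht
    have hfin : ({pq : ℤ × ℕ | 0 < pq.2 ∧ IsCoprime pq.1 (pq.2 : ℤ) ∧
        |t - (pq.1 : ℝ) / (pq.2 : ℝ)| ≤ (pq.2 : ℝ) ^ (-ν)} ∩
        {pq : ℤ × ℕ | pq.2 < max 1 Q}).Finite := by
      apply ((Set.finite_Icc (-(2 * (max 1 Q : ℕ) : ℤ)) (2 * (max 1 Q : ℕ))).prod
        (Set.finite_Iio (max 1 Q))).subset
      rintro ⟨p, q⟩ ⟨⟨hq0, -, happ⟩, hqQ⟩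
      obtain ⟨hb1, hb2⟩ := JB_pbounds hν0 ht0 ht1 hq0 happ
      have hqle : (q : ℤ) ≤ ((max 1 Q : ℕ) : ℤ) := by exact_mod_cast hqQ.le
      have hq0' : (0 : ℤ) ≤ (q : ℤ) := Int.natCast_nonneg q
      constructor
      · simp only [Set.mem_Icc]
        constructor <;> linarith
      · exact hqQ
    obtain ⟨⟨p, q⟩, hSm, hns⟩ := (hS.diff hfin).nonempty
    have hQq : max 1 Q ≤ q := not_lt.1 fun hlt => hns ⟨hSm, hlt⟩
    obtain ⟨hq0, -, happ⟩ := hSm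
    have hq1 : 1 ≤ q := le_trans (le_max_left 1 Q) hQq
    obtain ⟨hb1, hb2⟩ := JB_pbounds hν0 ht0 ht1 hq1 happ
    refine Set.mem_iUnion.2 ⟨(q, p), ?_⟩
    rw [hT]
    dsimp only
    rw [if_pos ⟨hQq, hb1, hb2⟩, Metric.mem_closedBall, Real.dist_eq]
    exact happ
  have key : μH[d] (Aset ν) ≤
      liminf (fun Q => ∑' i : ℕ × ℤ, Metric.ediam (T Q i) ^ d) atTop :=
    Measure.hausdorffMeasure_le_liminf_tsum d (Aset ν) r hrt T
      (Eventually.of_forall hdiam) (Eventually.of_forall hcov)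
  have hsum : ∀ Q, (∑' i : ℕ × ℤ, Metric.ediam (T Q i) ^ d) ≤ ∑' k, JBg ν d (k + Q) := by
    intro Q
    rw [ENNReal.tsum_prod']
    have hinner : ∀ q : ℕ, (∑' p : ℤ, Metric.ediam (T Q (q, p)) ^ d) ≤
        (if Q ≤ q then JBg ν d q else 0) := by
      intro q
      by_cases hq : max 1 Q ≤ q
      · have hq1 : 1 ≤ q := le_trans (le_max_left 1 Q) hq
        have hqr0 : (0 : ℝ) < (q : ℝ) ^ (-ν) :=
          Real.rpow_pos_of_pos (by exact_mod_cast hq1) _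
        have hz : ∀ p : ℤ, p ∉ Finset.Icc (-(q : ℤ)) (2 * q) →
            Metric.ediam (T Q (q, p)) ^ d = 0 := by
          intro p hp
          have hcond : ¬(max 1 Q ≤ q ∧ -(q : ℤ) ≤ p ∧ p ≤ 2 * q) := by
            simp only [Finset.mem_Icc] at hp
            tauto
          rw [hT]
          dsimp only
          rw [if_neg hcond]
          simp [ENNReal.zero_rpow_of_pos hd0]
        rw [tsum_eq_sum hz]
        have hterm : ∀ p ∈ Finset.Icc (-(q : ℤ)) (2 * q),
            Metric.ediam (T Q (q, p)) ^ d ≤ JBc ν d q := by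
          intro p _
          rw [hT]
          dsimp only
          split_ifs with h
          · rw [Real.closedBall_eq_Icc, Real.ediam_Icc,
              show ((p : ℝ) / q + (q : ℝ) ^ (-ν)) - ((p : ℝ) / q - (q : ℝ) ^ (-ν))
                = 2 * (q : ℝ) ^ (-ν) by ring,
              ENNReal.ofReal_rpow_of_pos (by linarith)]
            exact le_rfl
          · simp [ENNReal.zero_rpow_of_pos hd0]
        have hcard : (Finset.Icc (-(q : ℤ)) (2 * q)).card = 3 * q + 1 := by
          rw [Int.card_Icc]
          omega
        calc (∑ p ∈ Finset.Icc (-(q : ℤ)) (2 * q), Metric.ediam (T Q (q, p)) ^ d)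
            ≤ ∑ _p ∈ Finset.Icc (-(q : ℤ)) (2 * q), JBc ν d q := Finset.sum_le_sum hterm
          _ = (3 * q + 1 : ℕ) * JBc ν d q := by
              rw [Finset.sum_const, hcard, nsmul_eq_mul]
          _ = JBg ν d q := rfl
          _ = if Q ≤ q then JBg ν d q else 0 := by
              rw [if_pos (le_trans (le_max_right 1 Q) hq)]
      · have hz : ∀ p : ℤ, Metric.ediam (T Q (q, p)) ^ d = 0 := by
          intro p
          rw [hT]
          dsimp only
          rw [if_neg (by tauto)]
          simp [ENNReal.zero_rpow_of_pos hd0]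
        simp only [hz, tsum_zero]
        exact zero_le
    have hshift : (∑' k : ℕ, (if Q ≤ k + Q then JBg ν d (k + Q) else 0)) =
        ∑' q : ℕ, (if Q ≤ q then JBg ν d q else 0) := by
      have hsupp : Function.support (fun q : ℕ => if Q ≤ q then JBg ν d q else 0) ⊆
          Set.range (· + Q) := by
        intro q hq
        rcases le_or_gt Q q with h | h
        · exact ⟨q - Q, by show q - Q + Q = q; omega⟩
        · exact absurd (if_neg (not_le.2 h)) hq
      exact Function.Injective.tsum_eq (add_left_injective Q) hsupp
    calc (∑' (q : ℕ) (p : ℤ), Metric.ediam (T Q (q, p)) ^ d)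
        ≤ ∑' q : ℕ, (if Q ≤ q then JBg ν d q else 0) := ENNReal.tsum_le_tsum hinner
      _ = ∑' k : ℕ, (if Q ≤ k + Q then JBg ν d (k + Q) else 0) := hshift.symm
      _ ≤ ∑' k : ℕ, JBg ν d (k + Q) := by
          apply ENNReal.tsum_le_tsum
          intro k
          split_ifs <;> simp
  have htail : Tendsto (fun Q => ∑' k, JBg ν d (k + Q)) atTop (𝓝 0) :=
    ENNReal.tendsto_sum_nat_add _ (JBg_sum_ne_top hν0 hd0 hνd)
  have hfinal : μH[d] (Aset ν) ≤ 0 := by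
    calc μH[d] (Aset ν)
        ≤ liminf (fun Q => ∑' i : ℕ × ℤ, Metric.ediam (T Q i) ^ d) atTop := key
      _ ≤ liminf (fun Q => ∑' k, JBg ν d (k + Q)) atTop :=
          liminf_le_liminf (Eventually.of_forall hsum)
      _ = 0 := htail.liminf_eq
  exact le_antisymm hfinal zero_le
end
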